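/- Let K be a compact Hausdorff space, X a real Banach space, and let f ∈ C(K,X) with ‖f‖ = 1. For any g ∈ C(K,X): (i) if f ⊥_{ρ₊} g in C(K,X), then there exists k₀ ∈ M_f such that f(k₀) ⊥_{ρ₊} g(k₀) in X; (ii) if f ⊥_{ρ₋} g in C(K,X), then there exists k₀ ∈ M_f such that f(k₀) ⊥_{ρ₋} g(k₀) in X. -/

import Mathlib

open Filter Topology Set Metric NormedSpace

noncomputable section

/-- Birkhoff–James orthogonality: `x ⊥_B y` iff `‖x + t • y‖ ≥ ‖x‖` for all real `t`. -/
def BJOrth {E : Type*} [NormedAddCommGroup E] [NormedSpace ℝ E] (x y : E) : Prop :=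
  ∀ t : ℝ, ‖x‖ ≤ ‖x + t • y‖

/-- The norm derivative `ρ'₊(x,y) = ‖x‖ · lim_{t→0⁺} (‖x+ty‖-‖x‖)/t`. -/
def rhoPlus {E : Type*} [NormedAddCommGroup E] [NormedSpace ℝ E] (x y : E) : ℝ :=
  ‖x‖ * limUnder (𝓝[>] (0 : ℝ)) (fun t => (‖x + t • y‖ - ‖x‖) / t)

/-- The norm derivative `ρ'₋(x,y) = ‖x‖ · lim_{t→0⁻} (‖x+ty‖-‖x‖)/t`. -/
def rhoMinus {E : Type*} [NormedAddCommGroup E] [NormedSpace ℝ E] (x y : E) : ℝ :=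
  ‖x‖ * limUnder (𝓝[<] (0 : ℝ)) (fun t => (‖x + t • y‖ - ‖x‖) / t)

/-- The norm derivative `ρ'(x,y) = (ρ'₊(x,y) + ρ'₋(x,y))/2`. -/
def rhoDer {E : Type*} [NormedAddCommGroup E] [NormedSpace ℝ E] (x y : E) : ℝ :=
  (rhoPlus x y + rhoMinus x y) / 2

/-- `x` is an exposed point of the closed unit ball of `E`: there is a norm-one functional `f`
with `f x = 1` and `f u < 1` for every `u` in the ball with `u ≠ x`. -/
def ExposedPt {E : Type*} [NormedAddCommGroup E] [NormedSpace ℝ E] (x : E) : Prop :=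
  ‖x‖ ≤ 1 ∧ ∃ f : E →L[ℝ] ℝ, ‖f‖ = 1 ∧ f x = 1 ∧ ∀ u : E, ‖u‖ ≤ 1 → u ≠ x → f u < 1

section helpers

variable {E : Type*} [NormedAddCommGroup E] [NormedSpace ℝ E]

/-- The right difference quotient of the norm. -/
def qd (x y : E) (t : ℝ) : ℝ := (‖x + t • y‖ - ‖x‖) / t

lemma qd_mono (x y : E) : MonotoneOn (qd x y) (Ioi 0) := by
  rintro s hs t ht hst
  simp only [mem_Ioi] at hs ht
  unfold qd
  have ha : (0 : ℝ) ≤ s / t := by positivity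
  have hb : (0 : ℝ) ≤ 1 - s / t := by
    have := div_le_one_of_le₀ hst ht.le
    linarith
  have hkey : ‖x + s • y‖ ≤ (1 - s / t) * ‖x‖ + (s / t) * ‖x + t • y‖ := by
    have hst' : s / t * t = s := div_mul_cancel₀ s ht.ne'
    have hx : x + s • y = (1 - s / t) • x + (s / t) • (x + t • y) := by
      rw [smul_add, sub_smul, one_smul, smul_smul, hst']; abel
    rw [hx]
    refine (norm_add_le _ _).trans ?_
    rw [norm_smul, norm_smul, Real.norm_of_nonneg hb, Real.norm_of_nonneg ha]
  rw [div_le_div_iff₀ hs ht]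
  have h2 : ((1 - s / t) * ‖x‖ + (s / t) * ‖x + t • y‖) * t
      = ‖x‖ * t - s * ‖x‖ + s * ‖x + t • y‖ := by field_simp
  nlinarith [mul_le_mul_of_nonneg_right hkey ht.le]

lemma qd_lb (x y : E) {t : ℝ} (ht : 0 < t) : -‖y‖ ≤ qd x y t := by
  unfold qd
  rw [le_div_iff₀ ht]
  have h1 : ‖x‖ ≤ ‖x + t • y‖ + ‖t • y‖ := by
    simpa using norm_add_le (x + t • y) (-(t • y))
  have h2 : ‖t • y‖ = t * ‖y‖ := by rw [norm_smul, Real.norm_of_nonneg ht.le]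
  nlinarith

lemma qd_bdd (x y : E) : BddBelow (qd x y '' Ioi 0) := by
  refine ⟨-‖y‖, ?_⟩
  rintro _ ⟨t, ht, rfl⟩
  exact qd_lb x y ht

/-- The limit value of the right difference quotient. -/
def rp (x y : E) : ℝ := sInf (qd x y '' Ioi 0)

lemma tendsto_qd (x y : E) : Tendsto (qd x y) (𝓝[>] (0 : ℝ)) (𝓝 (rp x y)) :=
  (qd_mono x y).tendsto_nhdsGT (qd_bdd x y)

lemma rp_le_qd (x y : E) {t : ℝ} (ht : 0 < t) : rp x y ≤ qd x y t :=
  csInf_le (qd_bdd x y) ⟨t, ht, rfl⟩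

lemma le_rp (x y : E) {c : ℝ} (h : ∀ t : ℝ, 0 < t → c ≤ qd x y t) : c ≤ rp x y :=
  le_csInf ⟨qd x y 1, 1, by norm_num, rfl⟩ (by rintro _ ⟨t, ht, rfl⟩; exact h t ht)

lemma rhoPlus_eq' (x y : E) : rhoPlus x y = ‖x‖ * rp x y := by
  unfold rhoPlus
  congr 1
  exact (tendsto_qd x y).limUnder_eq

lemma rhoMinus_eq' (x y : E) : rhoMinus x y = -(‖x‖ * rp x (-y)) := by
  unfold rhoMinus
  have hneg : Tendsto (fun t : ℝ => -t) (𝓝[<] (0 : ℝ)) (𝓝[>] (0 : ℝ)) := by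
    refine tendsto_nhdsWithin_of_tendsto_nhds_of_eventually_within _ ?_ ?_
    · simpa using (continuous_neg.tendsto (0 : ℝ)).mono_left nhdsWithin_le_nhds
    · filter_upwards [self_mem_nhdsWithin] with t ht
      simpa using ht
  have h1 : Tendsto (fun t : ℝ => (‖x + t • y‖ - ‖x‖) / t) (𝓝[<] (0 : ℝ))
      (𝓝 (-(rp x (-y)))) := by
    have h2 := ((tendsto_qd x (-y)).comp hneg).neg
    convert h2 using 2 with t
    unfold qd
    simp only [Function.comp_apply, smul_neg, neg_smul, neg_neg, div_neg, neg_neg]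
  rw [h1.limUnder_eq]
  ring

lemma mapClusterPt_mem_of_closed {K : Type*} [TopologicalSpace K] {u : ℕ → K} {k : K}
    (h : MapClusterPt k atTop u) {s : Set K} (hs : IsClosed s)
    (hu : ∀ᶠ n in atTop, u n ∈ s) : k ∈ s := by
  have h0 : ClusterPt k (map u atTop) := h
  have h1 : map u atTop ≤ 𝓟 s := le_principal_iff.mpr hu
  have h2 : ClusterPt k (𝓟 s) := h0.mono h1
  rw [← hs.closure_eq]
  exact mem_closure_iff_clusterPt.mpr h2

end helpers

/-- Main lemma: if `‖f‖ = 1` and the limiting difference quotient vanishes, then it vanishes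
pointwise at some norm-attaining point. -/
lemma main_rp {K X : Type*} [TopologicalSpace K] [CompactSpace K]
    [NormedAddCommGroup X] [NormedSpace ℝ X]
    (f g : C(K, X)) (hf : ‖f‖ = 1) (h : rp f g = 0) :
    ∃ k₀ : K, ‖f k₀‖ = 1 ∧ rp (f k₀) (g k₀) = 0 := by
  have hK : Nonempty K := by
    by_contra h'
    rw [not_nonempty_iff] at h'
    have hf0 : f = 0 := by ext k; exact isEmptyElim k
    rw [hf0, norm_zero] at hf
    norm_num at hf
  set tn : ℕ → ℝ := fun n => (n + 1 : ℝ)⁻¹ with htn_def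
  have htn : ∀ n, 0 < tn n := fun n => by positivity
  have htend : Tendsto tn atTop (𝓝 0) := by
    simpa [htn_def, one_div] using tendsto_one_div_add_atTop_nhds_zero_nat (𝕜 := ℝ)
  have hex : ∀ n : ℕ, ∃ kn : K, ∀ j : K,
      ‖f j + tn n • g j‖ ≤ ‖f kn + tn n • g kn‖ := by
    intro n
    obtain ⟨kn, -, hkn⟩ := IsCompact.exists_isMaxOn isCompact_univ univ_nonempty
      ((f + tn n • g).continuous.norm.continuousOn)
    refine ⟨kn, fun j => ?_⟩
    simpa using hkn (mem_univ j)
  choose k hk using hex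
  have hne : ∀ n, ‖f + tn n • g‖ = ‖f (k n) + tn n • g (k n)‖ := by
    intro n
    refine le_antisymm ?_ ?_
    · refine (ContinuousMap.norm_le _ (norm_nonneg _)).mpr fun j => ?_
      simpa using hk n j
    · simpa using (f + tn n • g).norm_coe_le_norm (k n)
  obtain ⟨k₀, hk₀⟩ : ∃ x : K, MapClusterPt x atTop k := by
    obtain ⟨x, hx⟩ := exists_clusterPt_of_compactSpace (map k atTop)
    exact ⟨x, hx⟩
  -- lower bound on ‖f (k n)‖
  have hlb : ∀ n, 1 - 2 * ‖g‖ * tn n ≤ ‖f (k n)‖ := by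
    intro n
    have h1 : ‖f‖ - ‖tn n • g‖ ≤ ‖f + tn n • g‖ := by
      have h1' : ‖f‖ ≤ ‖f + tn n • g‖ + ‖tn n • g‖ := by
        simpa using norm_add_le (f + tn n • g) (-(tn n • g))
      linarith
    have h2 : ‖tn n • g‖ = tn n * ‖g‖ := by
      rw [norm_smul, Real.norm_of_nonneg (htn n).le]
    have h3 : ‖f (k n) + tn n • g (k n)‖ - ‖tn n • g (k n)‖ ≤ ‖f (k n)‖ := by
      have := norm_add_le (f (k n)) (tn n • g (k n))
      linarith
    have h4 : ‖tn n • g (k n)‖ ≤ tn n * ‖g‖ := by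
      rw [norm_smul, Real.norm_of_nonneg (htn n).le]
      exact mul_le_mul_of_nonneg_left (g.norm_coe_le_norm (k n)) (htn n).le
    have h5 := hne n
    rw [hf] at h1
    nlinarith
  have hfk₀ : ‖f k₀‖ = 1 := by
    refine le_antisymm (hf ▸ f.norm_coe_le_norm k₀) ?_
    by_contra hcon
    push_neg at hcon
    set ε := 1 - ‖f k₀‖ with hε_def
    have hε : 0 < ε := by linarith
    have hcl : k₀ ∈ {j : K | 1 - ε / 2 ≤ ‖f j‖} := by
      refine mapClusterPt_mem_of_closed hk₀ (isClosed_le continuous_const f.continuous.norm) ?_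
      have hev : ∀ᶠ n in atTop, 2 * ‖g‖ * tn n < ε / 2 := by
        have h6 : Tendsto (fun n => 2 * ‖g‖ * tn n) atTop (𝓝 (2 * ‖g‖ * 0)) :=
          htend.const_mul _
        rw [mul_zero] at h6
        exact h6.eventually (eventually_lt_nhds (by linarith))
      filter_upwards [hev] with n hn
      have := hlb n
      show 1 - ε / 2 ≤ ‖f (k n)‖
      linarith
    have hcl' : 1 - ε / 2 ≤ ‖f k₀‖ := hcl
    linarith
  refine ⟨k₀, hfk₀, ?_⟩
  have hub : rp (f k₀) (g k₀) ≤ 0 := by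
    rw [← h]
    refine le_csInf ⟨qd f g 1, 1, by norm_num, rfl⟩ ?_
    rintro _ ⟨t, ht, rfl⟩
    rw [mem_Ioi] at ht
    refine (rp_le_qd _ _ ht).trans ?_
    unfold qd
    have h7 : ‖f k₀ + t • g k₀‖ ≤ ‖f + t • g‖ := by
      simpa using (f + t • g).norm_coe_le_norm k₀
    rw [hfk₀, hf]
    gcongr
  have hlb2 : 0 ≤ rp (f k₀) (g k₀) := by
    refine le_rp _ _ fun t ht => ?_
    have hcl : k₀ ∈ {j : K | 0 ≤ (‖f j + t • g j‖ - ‖f j‖) / t} := by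
      refine mapClusterPt_mem_of_closed hk₀ ?_ ?_
      · exact isClosed_le continuous_const
          (((f.continuous.add (continuous_const.smul g.continuous)).norm.sub
            f.continuous.norm).div_const t)
      · have hev : ∀ᶠ n in atTop, tn n < t := htend.eventually (eventually_lt_nhds ht)
        filter_upwards [hev] with n hn
        show (0 : ℝ) ≤ (‖f (k n) + t • g (k n)‖ - ‖f (k n)‖) / t
        have h8 : 0 ≤ qd f g (tn n) := h ▸ rp_le_qd f g (htn n)
        have h9 : qd f g (tn n) = (‖f (k n) + tn n • g (k n)‖ - 1) / tn n := by
          unfold qd at h8 ⊢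
          rw [hne n, hf]
        have h10 : (‖f (k n) + tn n • g (k n)‖ - 1) / tn n
            ≤ (‖f (k n) + tn n • g (k n)‖ - ‖f (k n)‖) / tn n := by
          have hfkn : ‖f (k n)‖ ≤ 1 := hf ▸ f.norm_coe_le_norm (k n)
          gcongr
        have h11 : (‖f (k n) + tn n • g (k n)‖ - ‖f (k n)‖) / tn n
            ≤ (‖f (k n) + t • g (k n)‖ - ‖f (k n)‖) / t := by
          have h11' := qd_mono (f (k n)) (g (k n)) (mem_Ioi.mpr (htn n))
            (mem_Ioi.mpr ((htn n).trans hn)) hn.le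
          unfold qd at h11'
          exact h11'
        rw [h9] at h8
        linarith
    simpa only [mem_setOf_eq, qd] using hcl
  linarith

theorem stmt7 {K X : Type*} [TopologicalSpace K] [CompactSpace K] [T2Space K]
    [NormedAddCommGroup X] [NormedSpace ℝ X] [CompleteSpace X]
    (f : C(K, X)) (hf : ‖f‖ = 1) (g : C(K, X)) :
    (rhoPlus f g = 0 → ∃ k₀ : K, ‖f k₀‖ = ‖f‖ ∧ rhoPlus (f k₀) (g k₀) = 0) ∧
    (rhoMinus f g = 0 → ∃ k₀ : K, ‖f k₀‖ = ‖f‖ ∧ rhoMinus (f k₀) (g k₀) = 0) := by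
  constructor
  · intro h
    rw [rhoPlus_eq', hf, one_mul] at h
    obtain ⟨k₀, hk1, hk2⟩ := main_rp f g hf h
    exact ⟨k₀, by rw [hk1, hf], by rw [rhoPlus_eq', hk2, mul_zero]⟩
  · intro h
    rw [rhoMinus_eq', hf, one_mul, neg_eq_zero] at h
    obtain ⟨k₀, hk1, hk2⟩ := main_rp f (-g) hf h
    refine ⟨k₀, by rw [hk1, hf], ?_⟩
    rw [rhoMinus_eq']
    have : (-g) k₀ = -(g k₀) := by simp
    rw [this] at hk2
    rw [hk2, mul_zero, neg_zero]
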